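/- arXiv:1412.3633 — 2 statements merged into one kernel-verified Lean document; each statement's English description precedes it below -/
import Mathlib

section
/- For every theory Σ, with Σ^PL = {A + i ⇒ B + i | A ⇒ B ∈ Σ, i ∈ ℤ}, it holds that Mod(Σ) = Mod^PL(Σ^PL); consequently, for every attribute implication A ⇒ B annotated by time points, Σ ⊨ A ⇒ B if and only if Σ^PL ⊨_PL A ⇒ B. -/
namespace TAI

variable {Y : Type*}

/-- Time shift of a set of time-annotated attributes: `M + j`. -/
def shiftS (M : Set (Y × ℤ)) (j : ℤ) : Set (Y × ℤ) :=
  (fun p : Y × ℤ => (p.1, p.2 + j)) '' M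

/-- Time shift of a finite set of time-annotated attributes: `A + j`. -/
def shiftF [DecidableEq Y] (A : Finset (Y × ℤ)) (j : ℤ) : Finset (Y × ℤ) :=
  A.image (fun p => (p.1, p.2 + j))

/-- An attribute implication over `Y` annotated by time points: a pair
`(A, B)` of finite subsets of `T_Y = Y × ℤ`, read as `A ⇒ B`. -/
abbrev Fml (Y : Type*) := Finset (Y × ℤ) × Finset (Y × ℤ)

/-- `A ⇒ B` is true in `M ⊆ T_Y`: for every `i ∈ ℤ`, `A + i ⊆ M` implies `B + i ⊆ M`. -/
def Holds [DecidableEq Y] (M : Set (Y × ℤ)) (φ : Fml Y) : Prop :=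
  ∀ i : ℤ, ↑(shiftF φ.1 i) ⊆ M → ↑(shiftF φ.2 i) ⊆ M

/-- The models of a theory `T`. -/
def Mods [DecidableEq Y] (T : Set (Fml Y)) : Set (Set (Y × ℤ)) :=
  {M | ∀ φ ∈ T, Holds M φ}

/-- Semantic entailment: `T ⊨ φ`. -/
def Entails [DecidableEq Y] (T : Set (Fml Y)) (φ : Fml Y) : Prop :=
  ∀ M ∈ Mods T, Holds M φ

/-- Semantic closure `[M]_Σ`. -/
def semClos [DecidableEq Y] (T : Set (Fml Y)) (M : Set (Y × ℤ)) : Set (Y × ℤ) :=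
  ⋂₀ {N | N ∈ Mods T ∧ M ⊆ N}

/-- Classical (time-point-free) truth: `M ⊨_PL A ⇒ B` iff `A ⊆ M` implies `B ⊆ M`. -/
def HoldsPL (M : Set (Y × ℤ)) (φ : Fml Y) : Prop :=
  ↑φ.1 ⊆ M → ↑φ.2 ⊆ M

/-- Classical models. -/
def ModsPL (T : Set (Fml Y)) : Set (Set (Y × ℤ)) :=
  {M | ∀ φ ∈ T, HoldsPL M φ}

/-- Classical semantic entailment `⊨_PL`. -/
def EntailsPL (T : Set (Fml Y)) (φ : Fml Y) : Prop :=
  ∀ M ∈ ModsPL T, HoldsPL M φ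

/-- `Σ^PL = {A + i ⇒ B + i | A ⇒ B ∈ Σ, i ∈ ℤ}`. -/
def shiftAll [DecidableEq Y] (T : Set (Fml Y)) : Set (Fml Y) :=
  {ψ | ∃ φ ∈ T, ∃ i : ℤ, ψ = (shiftF φ.1 i, shiftF φ.2 i)}

/-- One step of the syntactic closure construction. -/
def synStep [DecidableEq Y] (T : Set (Fml Y)) (M : Set (Y × ℤ)) : Set (Y × ℤ) :=
  M ∪ ⋃₀ {S | ∃ φ ∈ T, ∃ i : ℤ, ↑(shiftF φ.1 i) ⊆ M ∧ S = (↑(shiftF φ.2 i) : Set (Y × ℤ))}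

/-- `M_Σ^n`. -/
def synIter [DecidableEq Y] (T : Set (Fml Y)) (M : Set (Y × ℤ)) : ℕ → Set (Y × ℤ)
  | 0 => M
  | n + 1 => synStep T (synIter T M n)

/-- The syntactic closure `M_Σ^ω`. -/
def synClos [DecidableEq Y] (T : Set (Fml Y)) (M : Set (Y × ℤ)) : Set (Y × ℤ) :=
  ⋃ n : ℕ, synIter T M n

/-- Provability from `T` using the rules (Ax), (Cut) and (Shf). -/
inductive Prov [DecidableEq Y] (T : Set (Fml Y)) : Fml Y → Prop
  | hyp {φ : Fml Y} : φ ∈ T → Prov T φ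
  | ax (A B : Finset (Y × ℤ)) : Prov T (A ∪ B, A)
  | cut {A B C D : Finset (Y × ℤ)} :
      Prov T (A, B) → Prov T (B ∪ C, D) → Prov T (A ∪ C, D)
  | shf {A B : Finset (Y × ℤ)} (i : ℤ) :
      Prov T (A, B) → Prov T (shiftF A i, shiftF B i)

/-- Provability from `T` using only the rules (Ax) and (Cut) (no time shifts). -/
inductive ProvAC [DecidableEq Y] (T : Set (Fml Y)) : Fml Y → Prop
  | hyp {φ : Fml Y} : φ ∈ T → ProvAC T φ
  | ax (A B : Finset (Y × ℤ)) : ProvAC T (A ∪ B, A)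
  | cut {A B C D : Finset (Y × ℤ)} :
      ProvAC T (A, B) → ProvAC T (B ∪ C, D) → ProvAC T (A ∪ C, D)

/-- Provability from `T` using the rules (Ax) and (Cut_i). -/
inductive ProvCuti [DecidableEq Y] (T : Set (Fml Y)) : Fml Y → Prop
  | hyp {φ : Fml Y} : φ ∈ T → ProvCuti T φ
  | ax (A B : Finset (Y × ℤ)) : ProvCuti T (A ∪ B, A)
  | cuti {A B C D : Finset (Y × ℤ)} (i : ℤ) :
      ProvCuti T (A, shiftF B i) → ProvCuti T (B ∪ C, D) →
      ProvCuti T (A ∪ shiftF C i, shiftF D i)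

/-- Provability from `T` using the rules (Ref) and (Sim_i). -/
inductive ProvRS [DecidableEq Y] (T : Set (Fml Y)) : Fml Y → Prop
  | hyp {φ : Fml Y} : φ ∈ T → ProvRS T φ
  | ref (A : Finset (Y × ℤ)) : ProvRS T (A, A)
  | simi {A B C D : Finset (Y × ℤ)} (i : ℤ) :
      ProvRS T (A, shiftF B i) → ProvRS T (C, D) →
      ProvRS T (A ∪ shiftF (C \ B) i, shiftF D i)

/-- The closure operator induced by a closure system `S`. -/
def closOp (S : Set (Set (Y × ℤ))) (M : Set (Y × ℤ)) : Set (Y × ℤ) :=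
  ⋂₀ {N | N ∈ S ∧ M ⊆ N}

/-- The least time point occurring in a finite set (`0` for the empty set). -/
def lo (A : Finset (Y × ℤ)) : ℤ :=
  (A.image Prod.snd).min.untopD 0

/-- The greatest time point occurring in a finite set (`0` for the empty set). -/
def hi (A : Finset (Y × ℤ)) : ℤ :=
  (A.image Prod.snd).max.unbotD 0

/-- A formula `A ⇒ B` is predictive if `A ≠ ∅`, `B ≠ ∅`, and every time point in
`A` is less than or equal to every time point in `B`. -/
def Predictive (φ : Fml Y) : Prop :=
  φ.1.Nonempty ∧ φ.2.Nonempty ∧ ∀ p ∈ φ.1, ∀ q ∈ φ.2, p.2 ≤ q.2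

lemma coe_shiftF_subset [DecidableEq Y] (A : Finset (Y × ℤ)) (i : ℤ) (M : Set (Y × ℤ)) :
    (↑(shiftF A i) : Set (Y × ℤ)) ⊆ M ↔ ∀ p ∈ A, (p.1, p.2 + i) ∈ M := by
  rw [shiftF, Finset.coe_image, Set.image_subset_iff]
  simp [Set.subset_def]

lemma mem_shiftS (M : Set (Y × ℤ)) (j : ℤ) (p : Y × ℤ) :
    p ∈ shiftS M j ↔ (p.1, p.2 - j) ∈ M := by
  constructor
  · rintro ⟨q, hq, rfl⟩; simpa using hq
  · intro h; exact ⟨(p.1, p.2 - j), h, by simp⟩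

lemma shiftF_zero [DecidableEq Y] (A : Finset (Y × ℤ)) : shiftF A 0 = A := by
  simp [shiftF]

lemma holds_shiftS [DecidableEq Y] {M : Set (Y × ℤ)} {φ : Fml Y}
    (h : Holds M φ) (j : ℤ) : Holds (shiftS M j) φ := by
  intro i hA
  rw [coe_shiftF_subset] at hA ⊢
  have hA' : (↑(shiftF φ.1 (i - j)) : Set (Y × ℤ)) ⊆ M := by
    rw [coe_shiftF_subset]
    intro p hp
    have := hA p hp
    rw [mem_shiftS] at this
    simpa [add_sub_assoc] using this
  have hB := h (i - j) hA'
  rw [coe_shiftF_subset] at hB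
  intro p hp
  rw [mem_shiftS]
  have := hB p hp
  simpa [add_sub_assoc] using this

/-- `Mod(Σ) = Mod^PL(Σ^PL)`; consequently `Σ ⊨ A ⇒ B` iff
`Σ^PL ⊨_PL A ⇒ B`. -/
theorem mods_eq_modsPL [DecidableEq Y] [Fintype Y] [Nonempty Y]
    (T : Set (Fml Y)) :
    Mods T = ModsPL (shiftAll T) ∧
    ∀ A B : Finset (Y × ℤ), Entails T (A, B) ↔ EntailsPL (shiftAll T) (A, B) := by
  have hmods : Mods T = ModsPL (shiftAll T) := by
    ext M
    constructor
    · rintro h ψ ⟨φ, hφ, i, rfl⟩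
      exact h φ hφ i
    · intro h φ hφ i
      exact h (shiftF φ.1 i, shiftF φ.2 i) ⟨φ, hφ, i, rfl⟩
  refine ⟨hmods, fun A B => ?_⟩
  constructor
  · intro h M hM hA
    have hM' : M ∈ Mods T := by rw [hmods]; exact hM
    have := h M hM' 0
    rw [shiftF_zero, shiftF_zero] at this
    exact this hA
  · intro h M hM i hA
    have hN : shiftS M (-i) ∈ Mods T := fun φ hφ => holds_shiftS (hM φ hφ) (-i)
    rw [hmods] at hN
    have hAN : (↑A : Set (Y × ℤ)) ⊆ shiftS M (-i) := by
      intro p hp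
      rw [mem_shiftS]
      rw [coe_shiftF_subset] at hA
      simpa [sub_neg_eq_add] using hA p (by simpa using hp)
    have hBN := h (shiftS M (-i)) hN hAN
    rw [coe_shiftF_subset]
    intro p hp
    have := hBN (by simpa using hp : (p : Y × ℤ) ∈ (↑B : Set (Y × ℤ)))
    rw [mem_shiftS] at this
    simpa [sub_neg_eq_add] using this

end TAI
end

section
/- For every theory Σ and every attribute implication A ⇒ B annotated by time points: Σ ⊢ A ⇒ B if and only if there exists a finite subset Σ' of Σ^PL such that A ⇒ B is provable from Σ' using only the rules (Ax) and (Cut) (i.e., without using the time-shift rule (Shf)). -/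
namespace TAI

variable {Y : Type*}

lemma shiftF_union [DecidableEq Y] (A B : Finset (Y × ℤ)) (i : ℤ) :
    shiftF (A ∪ B) i = shiftF A i ∪ shiftF B i := by
  simp [shiftF, Finset.image_union]

lemma shiftF_shiftF [DecidableEq Y] (A : Finset (Y × ℤ)) (j i : ℤ) :
    shiftF (shiftF A j) i = shiftF A (j + i) := by
  simp only [shiftF, Finset.image_image]
  congr 1
  funext p
  simp [add_assoc]

lemma ProvAC.mono [DecidableEq Y] {S S' : Set (Fml Y)} (h : S ⊆ S') {φ : Fml Y}
    (hp : ProvAC S φ) : ProvAC S' φ := by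
  induction hp with
  | hyp hφ => exact ProvAC.hyp (h hφ)
  | ax A B => exact ProvAC.ax A B
  | cut _ _ ih1 ih2 => exact ProvAC.cut ih1 ih2

lemma ProvAC.shift [DecidableEq Y] {S : Set (Fml Y)} {φ : Fml Y}
    (hp : ProvAC S φ) (i : ℤ) :
    ProvAC ((fun ψ : Fml Y => (shiftF ψ.1 i, shiftF ψ.2 i)) '' S)
      (shiftF φ.1 i, shiftF φ.2 i) := by
  induction hp with
  | hyp hφ => exact ProvAC.hyp ⟨_, hφ, rfl⟩
  | ax A B =>
      have := ProvAC.ax (T := (fun ψ : Fml Y => (shiftF ψ.1 i, shiftF ψ.2 i)) '' S)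
        (shiftF A i) (shiftF B i)
      simpa [shiftF_union] using this
  | cut _ _ ih1 ih2 =>
      have := ProvAC.cut ih1 (by simpa [shiftF_union] using ih2)
      simpa [shiftF_union] using this

lemma ProvAC_of_prov_members [DecidableEq Y] {T S : Set (Fml Y)}
    (h : ∀ ψ ∈ S, Prov T ψ) {φ : Fml Y} (hp : ProvAC S φ) : Prov T φ := by
  induction hp with
  | hyp hφ => exact h _ hφ
  | ax A B => exact Prov.ax A B
  | cut _ _ ih1 ih2 => exact Prov.cut ih1 ih2

/-- `Σ ⊢ A ⇒ B` iff there is a finite `Σ' ⊆ Σ^PL` such that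
`A ⇒ B` is provable from `Σ'` using only (Ax) and (Cut). -/
theorem prov_iff_finite_shiftAll_provAC [DecidableEq Y] [Fintype Y] [Nonempty Y]
    (T : Set (Fml Y)) (A B : Finset (Y × ℤ)) :
    Prov T (A, B) ↔
      ∃ T' : Finset (Fml Y), ↑T' ⊆ shiftAll T ∧ ProvAC (↑T' : Set (Fml Y)) (A, B) := by
  constructor
  · intro hp
    -- strengthen: for any φ provable, get finite T'
    suffices h : ∀ φ : Fml Y, Prov T φ →
        ∃ T' : Finset (Fml Y), ↑T' ⊆ shiftAll T ∧ ProvAC (↑T' : Set (Fml Y)) φ by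
      exact h (A, B) hp
    intro φ₀ hp
    induction hp with
    | hyp hψ =>
        rename_i ψ
        refine ⟨{ψ}, ?_, ProvAC.hyp (by simp)⟩
        intro χ hχ
        simp only [Finset.coe_singleton, Set.mem_singleton_iff] at hχ
        subst hχ
        exact ⟨χ, hψ, 0, by simp [shiftF_zero]⟩
    | ax A B => exact ⟨∅, by simp, ProvAC.ax A B⟩
    | cut _ _ ih1 ih2 =>
        obtain ⟨T1, hT1, hp1⟩ := ih1
        obtain ⟨T2, hT2, hp2⟩ := ih2
        refine ⟨T1 ∪ T2, ?_, ?_⟩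
        · intro χ hχ
          simp only [Finset.coe_union, Set.mem_union] at hχ
          exact hχ.elim (fun h => hT1 h) (fun h => hT2 h)
        · exact ProvAC.cut
            (hp1.mono (by intro x hx; simp only [Finset.coe_union]; exact Or.inl hx))
            (hp2.mono (by intro x hx; simp only [Finset.coe_union]; exact Or.inr hx))
    | @shf A B i _ ih =>
        obtain ⟨T1, hT1, hp1⟩ := ih
        refine ⟨T1.image (fun ψ => (shiftF ψ.1 i, shiftF ψ.2 i)), ?_, ?_⟩
        · intro χ hχ
          simp only [Finset.coe_image, Set.mem_image, Finset.mem_coe] at hχ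
          obtain ⟨ψ, hψ, rfl⟩ := hχ
          obtain ⟨ρ, hρ, j, rfl⟩ := hT1 hψ
          exact ⟨ρ, hρ, j + i, by simp [shiftF_shiftF]⟩
        · have := hp1.shift i
          refine this.mono ?_
          intro x hx
          simp only [Set.mem_image, Finset.coe_image, Finset.mem_coe] at hx ⊢
          exact hx
  · rintro ⟨T', hT', hp⟩
    refine ProvAC_of_prov_members (fun ψ hψ => ?_) hp
    obtain ⟨ρ, hρ, j, rfl⟩ := hT' hψ
    exact Prov.shf j (Prov.hyp hρ)

end TAI
end
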